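/- Let E be a semisimple right R-module, let S = End(E), and let f ∈ S with image X = im f. Then the principal right ideal fS equals {g ∈ S : im g ⊆ X}. -/
import Mathlib

theorem stmt8 {R E : Type*} [Ring R] [AddCommGroup E] [Module R E]
    [IsSemisimpleModule R E] (f : Module.End R E) :
    {g : Module.End R E | ∃ h : Module.End R E, g = f * h} =
      {g : Module.End R E | LinearMap.range g ≤ LinearMap.range f} := by
  ext g
  simp only [Set.mem_setOf_eq]
  constructor
  · rintro ⟨h, rfl⟩
    rintro x ⟨y, rfl⟩
    exact ⟨h y, rfl⟩
  · intro hg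
    obtain ⟨C, hC⟩ := exists_isCompl (LinearMap.ker f)
    set fC : C →ₗ[R] E := f ∘ₗ C.subtype with hfC
    have hinj : Function.Injective fC := by
      intro a b hab
      have h2 : (a : E) - b ∈ LinearMap.ker f ⊓ C := by
        refine ⟨?_, sub_mem a.2 b.2⟩
        show f ((a : E) - b) = 0
        rw [map_sub, sub_eq_zero]
        exact hab
      rw [hC.inf_eq_bot, Submodule.mem_bot, sub_eq_zero] at h2
      exact Subtype.ext h2
    have hrange : LinearMap.range fC = LinearMap.range f := by
      rw [hfC, LinearMap.range_comp, Submodule.range_subtype, LinearMap.range_eq_map,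
        ← hC.sup_eq_top, Submodule.map_sup]
      have : Submodule.map f (LinearMap.ker f) = ⊥ := by
        rw [Submodule.eq_bot_iff]
        rintro x ⟨y, hy, rfl⟩
        exact hy
      rw [this, bot_sup_eq]
    let e : C ≃ₗ[R] LinearMap.range f :=
      (LinearEquiv.ofInjective fC hinj).trans (LinearEquiv.ofEq _ _ hrange)
    refine ⟨C.subtype ∘ₗ (e.symm : LinearMap.range f →ₗ[R] C) ∘ₗ
      g.codRestrict (LinearMap.range f) (fun x => hg ⟨x, rfl⟩), ?_⟩
    ext x
    have key : ∀ c : C, f (C.subtype c) = (e c : E) := fun c => rfl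
    show g x = f (C.subtype (e.symm _))
    rw [key, e.apply_symm_apply]
    rfl
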